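/- Let T be a complete theory with quantifier elimination in a countable relational language with unary predicate P, and let M̄ be a saturated (or just sufficiently saturated/countably saturated) model of T. If A ⊆ M̄ is a countable complete set, then there is a countable elementary substructure M of M̄ such that A ⊆ M and P(M) = P(M̄) ∩ A. -/

import Mathlib

open FirstOrder FirstOrder.Language FirstOrder.Language.Structure

universe u v

namespace RelCatPaper

variable {L : FirstOrder.Language.{u, v}}

/-- The language is relational: no function symbols. -/
def Relational (L : FirstOrder.Language.{u, v}) : Prop := ∀ n, IsEmpty (L.Functions n)

/-- `T` has quantifier elimination. -/
def HasQE (T : L.Theory) : Prop :=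
  ∀ (n : ℕ) (φ : L.Formula (Fin n)), ∃ ψ : L.Formula (Fin n), ψ.IsQF ∧
    ∀ (M : Type (max u v)) [L.Structure M], M ⊨ T →
      ∀ v : Fin n → M, φ.Realize v ↔ ψ.Realize v

variable (p : L.Relations 1)

/-- The set of realizations of the distinguished unary predicate `p` in `M`. -/
def Pset (M : Type*) [L.Structure M] : Set M := {x | RelMap p ![x]}

/-- The `P`-part of `M` as a substructure (the language being relational). -/
def Psub (hrel : Relational L) (M : Type*) [L.Structure M] : L.Substructure M :=
  ⟨Pset p M, fun {n} f => (hrel n).elim f⟩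

/-- `T` says that `P` is infinite. -/
def PInfinite (T : L.Theory) : Prop :=
  ∀ (M : Type (max u v)) [L.Structure M], M ⊨ T → (Pset p M).Infinite

/-- A subset `A` of `M` is *complete*: any formula over `A` realized by an element of `P`
is realized by an element of `P ∩ A`. -/
def CompleteSet (M : Type*) [L.Structure M] (A : Set M) : Prop :=
  ∀ (n : ℕ) (φ : L.Formula (Fin 1 ⊕ Fin n)) (c : Fin n → M), (∀ i, c i ∈ A) →
    (∃ x : M, x ∈ Pset p M ∧ φ.Realize (Sum.elim (fun _ => x) c)) →
    ∃ b : M, b ∈ A ∧ b ∈ Pset p M ∧ φ.Realize (Sum.elim (fun _ => b) c)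

/-- `tp(a/P(M))` is isolated (by a formula over `P(M)`). -/
def IsolatedOverP (M : Type*) [L.Structure M] {m : ℕ} (a : Fin m → M) : Prop :=
  ∃ (n : ℕ) (φ : L.Formula (Fin m ⊕ Fin n)) (c : Fin n → M),
    (∀ i, c i ∈ Pset p M) ∧ φ.Realize (Sum.elim a c) ∧
    ∀ (k : ℕ) (ψ : L.Formula (Fin m ⊕ Fin k)) (d : Fin k → M), (∀ i, d i ∈ Pset p M) →
      ψ.Realize (Sum.elim a d) →
      ∀ a' : Fin m → M, φ.Realize (Sum.elim a' c) → ψ.Realize (Sum.elim a' d)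

/-- `M` is atomic over its `P`-part. -/
def AtomicOverP (M : Type*) [L.Structure M] : Prop :=
  ∀ (m : ℕ) (a : Fin m → M), IsolatedOverP p M a

/-- `T` is relatively `(ω,ω)`-categorical. -/
def RelativelyCatCC (hrel : Relational L) (T : L.Theory) : Prop :=
  ∀ (M₁ M₂ : Type (max u v)) [L.Structure M₁] [L.Structure M₂],
    M₁ ⊨ T → M₂ ⊨ T → Countable M₁ → Countable M₂ →
    ∀ f : (Psub p hrel M₁) ≃[L] (Psub p hrel M₂),
      ∃ g : M₁ ≃[L] M₂, ∀ x : Psub p hrel M₁, g (x : M₁) = (f x : M₂)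

/-- `T` is relatively `ω`-categorical (the `P`-parts are countable). -/
def RelativelyCatOmega (hrel : Relational L) (T : L.Theory) : Prop :=
  ∀ (M₁ M₂ : Type (max u v)) [L.Structure M₁] [L.Structure M₂],
    M₁ ⊨ T → M₂ ⊨ T → Countable (Psub p hrel M₁) → Countable (Psub p hrel M₂) →
    ∀ f : (Psub p hrel M₁) ≃[L] (Psub p hrel M₂),
      ∃ g : M₁ ≃[L] M₂, ∀ x : Psub p hrel M₁, g (x : M₁) = (f x : M₂)

/-- `T` is relatively categorical. -/
def RelativelyCat (hrel : Relational L) (T : L.Theory) : Prop :=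
  ∀ (M₁ M₂ : Type (max u v)) [L.Structure M₁] [L.Structure M₂],
    M₁ ⊨ T → M₂ ⊨ T →
    ∀ f : (Psub p hrel M₁) ≃[L] (Psub p hrel M₂),
      ∃ g : M₁ ≃[L] M₂, ∀ x : Psub p hrel M₁, g (x : M₁) = (f x : M₂)

/-- `TP` is the common complete theory of the `P`-parts of models of `T`. -/
def IsPTheory (hrel : Relational L) (T TP : L.Theory) : Prop :=
  TP.IsComplete ∧
    ∀ (M : Type (max u v)) [L.Structure M], M ⊨ T → (Psub p hrel M : Type (max u v)) ⊨ TP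

/-- `x` is algebraic over `A` in `M`. -/
def InAcl (M : Type*) [L.Structure M] (A : Set M) (x : M) : Prop :=
  ∃ (n : ℕ) (φ : L.Formula (Fin 1 ⊕ Fin n)) (c : Fin n → M), (∀ i, c i ∈ A) ∧
    φ.Realize (Sum.elim (fun _ => x) c) ∧
    {y : M | φ.Realize (Sum.elim (fun _ => y) c)}.Finite

/-- `M` is almost internal to `P`: `M ⊆ acl(P(M) ∪ a)` for some finite tuple `a`. -/
def AlmostInternal (M : Type*) [L.Structure M] : Prop :=
  ∃ (m : ℕ) (a : Fin m → M), ∀ x : M, InAcl (L := L) M (Pset p M ∪ Set.range a) x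

/-- `M` is `1`-coanalyzable in `P`: there is a definable relation `R ⊆ M × P^ℓ`
projecting onto `M` with all fibers over tuples from `P` finite. -/
def OneCoanalyzable (M : Type*) [L.Structure M] : Prop :=
  ∃ (ℓ n : ℕ) (φ : L.Formula ((Fin 1 ⊕ Fin ℓ) ⊕ Fin n)) (e : Fin n → M),
    (∀ x : M, ∃ c : Fin ℓ → M, (∀ i, c i ∈ Pset p M) ∧
      φ.Realize (Sum.elim (Sum.elim (fun _ => x) c) e)) ∧
    ∀ c : Fin ℓ → M, (∀ i, c i ∈ Pset p M) →
      {x : M | φ.Realize (Sum.elim (Sum.elim (fun _ => x) c) e)}.Finite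

/-- `M` is saturated: every finitely realized set of formulas in one variable over fewer
than `#M` parameters is realized. -/
def IsSaturated (M : Type w) [L.Structure M] : Prop :=
  ∀ (ι : Type w), Cardinal.mk ι < Cardinal.mk M → ∀ (c : ι → M)
    (Φ : Set (L.Formula (Fin 1 ⊕ ι))),
    (∀ Φ₀ : Finset (L.Formula (Fin 1 ⊕ ι)), ↑Φ₀ ⊆ Φ →
      ∃ x : M, ∀ φ ∈ Φ₀, Formula.Realize φ (Sum.elim (fun _ => x) c)) →
    ∃ x : M, ∀ φ ∈ Φ, Formula.Realize φ (Sum.elim (fun _ => x) c)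

/-- Types over the `P`-part are uniformly definable (stable embeddedness of `P`). -/
def StablyEmbedded (T : L.Theory) : Prop :=
  ∀ (m k : ℕ) (ψ : L.Formula (Fin m ⊕ Fin k)),
    ∃ (n : ℕ) (χ : L.Formula (Fin k ⊕ Fin n)),
      ∀ (M : Type (max u v)) [L.Structure M], M ⊨ T →
        ∀ a : Fin m → M, ∃ c : Fin n → M, (∀ i, c i ∈ Pset p M) ∧
          ∀ b : Fin k → M, (∀ i, b i ∈ Pset p M) →
            (ψ.Realize (Sum.elim a b) ↔ χ.Realize (Sum.elim b c))


/-- `M` is `ℵ₁`-saturated (countably saturated). -/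
def CountablySaturated (M : Type w) [L.Structure M] : Prop :=
  ∀ (c : ℕ → M) (Φ : Set (L.Formula (Fin 1 ⊕ ℕ))),
    (∀ Φ₀ : Finset (L.Formula (Fin 1 ⊕ ℕ)), ↑Φ₀ ⊆ Φ →
      ∃ x : M, ∀ φ ∈ Φ₀, Formula.Realize φ (Sum.elim (fun _ => x) c)) →
    ∃ x : M, ∀ φ ∈ Φ, Formula.Realize φ (Sum.elim (fun _ => x) c)

/-- `(T,P)` is `1`-cardinal: every model of `T` has the same cardinality as its `P`-part. -/
def OneCardinal (T : L.Theory) : Prop :=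
  ∀ (M : Type (max u v)) [L.Structure M], M ⊨ T → Cardinal.mk M = Cardinal.mk (Pset p M)

section RCAux
universe w u'
variable {L : FirstOrder.Language.{u, v}} {M : Type w} [L.Structure M]

lemma RC_realize_congr {α : Type*} [DecidableEq α] {n : ℕ} (φ : L.BoundedFormula α n)
    {v v' : α → M} {xs : Fin n → M} (h : ∀ a ∈ φ.freeVarFinset, v a = v' a) :
    φ.Realize v xs ↔ φ.Realize v' xs := by
  rw [← BoundedFormula.realize_restrictFreeVar' (s := (↑φ.freeVarFinset : Set α))
      (Set.Subset.refl _) (v := v) (xs := xs),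
    ← BoundedFormula.realize_restrictFreeVar' (s := (↑φ.freeVarFinset : Set α))
      (Set.Subset.refl _) (v := v') (xs := xs)]
  have hvv : (v ∘ (↑) : (↑φ.freeVarFinset : Set α) → M) = v' ∘ (↑) :=
    funext fun a => h a (Finset.mem_coe.1 a.2)
  rw [hvv]

lemma RC_frealize_congr {α : Type*} [DecidableEq α] (φ : L.Formula α)
    {v v' : α → M} (h : ∀ a ∈ φ.freeVarFinset, v a = v' a) :
    φ.Realize v ↔ φ.Realize v' :=
  RC_realize_congr φ h

/-- bound on variable indices -/
def RC_vb (φ : L.Formula (ℕ ⊕ ℕ)) : ℕ :=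
  φ.freeVarFinset.sup (Sum.elim Nat.succ Nat.succ)

lemma RC_lt_vb_left {φ : L.Formula (ℕ ⊕ ℕ)} {i : ℕ} (h : Sum.inl i ∈ φ.freeVarFinset) :
    i < RC_vb φ :=
  Finset.le_sup (f := Sum.elim Nat.succ Nat.succ) h

lemma RC_lt_vb_right {φ : L.Formula (ℕ ⊕ ℕ)} {i : ℕ} (h : Sum.inr i ∈ φ.freeVarFinset) :
    i < RC_vb φ :=
  Finset.le_sup (f := Sum.elim Nat.succ Nat.succ) h

lemma RC_countable_bf (α : Type u') [Countable α] [Countable L.Symbols] :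
    Countable (Σ n, L.BoundedFormula α n) := by
  rw [← Cardinal.mk_le_aleph0_iff]
  refine (BoundedFormula.card_le).trans ?_
  have h1 : Cardinal.lift.{max u v} (Cardinal.mk α) ≤ Cardinal.aleph0 :=
    Cardinal.lift_le_aleph0.2 (Cardinal.mk_le_aleph0 (α := α))
  have h2 : Cardinal.lift.{u'} (L.card) ≤ Cardinal.aleph0 :=
    Cardinal.lift_le_aleph0.2 (Cardinal.mk_le_aleph0 (α := L.Symbols))
  simp only [max_le_iff, le_refl, true_and]
  exact (Cardinal.add_le_aleph0.2 ⟨h1, h2⟩)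

lemma RC_countable_bf' (α : Type u') [Countable α] [Countable L.Symbols] (n : ℕ) :
    Countable (L.BoundedFormula α n) := by
  have := RC_countable_bf (L := L) α
  exact Function.Injective.countable (f := fun φ : L.BoundedFormula α n => (⟨n, φ⟩ : Σ k, L.BoundedFormula α k)) (fun a b h => by simpa using h)

section OmegaSat

lemma RC_omega_sat (hsat : CountablySaturated (L := L) M) (e : ℕ → M)
    (θ : ℕ → L.Formula (ℕ ⊕ ℕ))
    (h0 : ∀ k, ∃ b : ℕ → M, (θ k).Realize (Sum.elim b e))
    (hstep : ∀ k (b : ℕ → M), (θ (k+1)).Realize (Sum.elim b e) → (θ k).Realize (Sum.elim b e)) :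
    ∃ b : ℕ → M, ∀ k, (θ k).Realize (Sum.elim b e) := by
  classical
  have hle : ∀ m k, m ≤ k → ∀ b : ℕ → M,
      (θ k).Realize (Sum.elim b e) → (θ m).Realize (Sum.elim b e) := by
    intro m k
    induction k with
    | zero => intro hm b h; obtain rfl : m = 0 := Nat.le_zero.1 hm; exact h
    | succ k ih =>
      intro hm b h
      by_cases hmk : m = k + 1
      · subst hmk; exact h
      · exact ih (by omega) b (hstep k b h)
  -- key extension step
  have key : ∀ (k : ℕ) (v : Fin k → M),
      (∀ n, ∃ b : ℕ → M, (∀ i : Fin k, b (i : ℕ) = v i) ∧ (θ n).Realize (Sum.elim b e)) →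
      ∃ x : M, ∀ n, ∃ b : ℕ → M, (∀ i : Fin (k+1), b (i : ℕ) = Fin.snoc (α := fun _ => M) v x i) ∧
        (θ n).Realize (Sum.elim b e) := by
    intro k v hv
    set c : ℕ → M := fun m =>
      if m % 2 = 0 then e (m / 2) else (if h : m / 2 < k then v ⟨m / 2, h⟩ else e 0) with hc
    have hc2 : ∀ i, c (2 * i) = e i := by
      intro i
      have h1 : (2 * i) % 2 = 0 := by omega
      have h2 : (2 * i) / 2 = i := by omega
      simp only [hc, h1, if_pos, h2]
    have hc1 : ∀ (i : ℕ) (h : i < k), c (2 * i + 1) = v ⟨i, h⟩ := by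
      intro i h
      have h1 : (2 * i + 1) % 2 ≠ 0 := by omega
      have h2 : (2 * i + 1) / 2 = i := by omega
      simp only [hc, if_neg h1, h2]
      rw [dif_pos h]
    set B : ℕ → ℕ := fun n => RC_vb (θ n) with hB
    set gm : (n : ℕ) → ℕ ⊕ ℕ → (Fin 1 ⊕ ℕ) ⊕ Fin (B n) := fun n s =>
      Sum.elim (fun i => if i < k then Sum.inl (Sum.inr (2 * i + 1))
        else if i = k then Sum.inl (Sum.inl 0)
        else if h : i - (k+1) < B n then Sum.inr ⟨i - (k+1), h⟩ else Sum.inl (Sum.inr 1))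
        (fun j => Sum.inl (Sum.inr (2 * j))) s with hgm
    set ρ : ℕ → L.Formula (Fin 1 ⊕ ℕ) := fun n => Formula.iExs (Fin (B n)) ((θ n).relabel (gm n)) with hρdef
    have hρ : ∀ (n : ℕ) (x : M), (ρ n).Realize (Sum.elim (fun _ => x) c) ↔
        ∃ b : ℕ → M, (∀ i : Fin k, b (i : ℕ) = v i) ∧ b k = x ∧
          (θ n).Realize (Sum.elim b e) := by
      intro n x
      rw [hρdef]
      rw [Formula.realize_iExs]
      simp only [Formula.realize_relabel, Function.comp_def]
      constructor
      · rintro ⟨iF, hiF⟩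
        refine ⟨fun m => if h : m < k then v ⟨m, h⟩ else if m = k then x
          else if h2 : m - (k+1) < B n then iF ⟨m - (k+1), h2⟩ else e 0, ?_, ?_, ?_⟩
        · intro i; simp [i.isLt]
        · simp
        · refine (RC_frealize_congr (θ n) ?_).1 hiF
          intro a ha
          rcases a with i | j
          · have hi : i < B n := RC_lt_vb_left ha
            rcases lt_trichotomy i k with h1 | h1 | h1
            · simp only [hgm, Sum.elim_inl, if_pos h1, Sum.elim_inr, hc1 i h1]
              simp [h1]
            · subst h1
              simp [hgm, Nat.lt_irrefl]
            · have h2 : ¬ i < k := by omega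
              have h3 : i ≠ k := by omega
              have h4 : i - (k+1) < B n := by omega
              simp only [hgm, Sum.elim_inl, if_neg h2, if_neg h3, dif_pos h4, Sum.elim_inr]
              simp [dif_neg h2, if_neg h3, dif_pos h4]
          · simp only [hgm, Sum.elim_inr, Sum.elim_inl, hc2 j]
      · rintro ⟨b, hbv, hbk, hbre⟩
        refine ⟨fun q => b (k + 1 + (q : ℕ)), ?_⟩
        refine (RC_frealize_congr (θ n) ?_).2 hbre
        intro a ha
        rcases a with i | j
        · have hi : i < B n := RC_lt_vb_left ha
          rcases lt_trichotomy i k with h1 | h1 | h1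
          · simp only [hgm, Sum.elim_inl, if_pos h1, Sum.elim_inr, hc1 i h1]
            exact (hbv ⟨i, h1⟩).symm
          · subst h1
            simp only [hgm, Sum.elim_inl, if_neg (lt_irrefl i), if_pos rfl, Sum.elim_inr]
            exact hbk.symm
          · have h2 : ¬ i < k := by omega
            have h3 : i ≠ k := by omega
            have h4 : i - (k+1) < B n := by omega
            simp only [hgm, Sum.elim_inl, if_neg h2, if_neg h3, dif_pos h4, Sum.elim_inr]
            congr 1
            omega
        · simp only [hgm, Sum.elim_inr, Sum.elim_inl, hc2 j]
    -- apply saturation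
    have hfs : ∀ Φ₀ : Finset (L.Formula (Fin 1 ⊕ ℕ)), ↑Φ₀ ⊆ Set.range ρ →
        ∃ x : M, ∀ φ ∈ Φ₀, Formula.Realize φ (Sum.elim (fun _ => x) c) := by
      intro Φ₀ hΦ₀
      set N : ℕ := Φ₀.sup (fun φ => if h : ∃ n, ρ n = φ then h.choose else 0) with hN
      obtain ⟨b, hbv, hbre⟩ := hv N
      refine ⟨b k, ?_⟩
      intro φ hφ
      have hex : ∃ n, ρ n = φ := hΦ₀ hφ
      have hn : hex.choose ≤ N := by
        have h5 := Finset.le_sup (f := fun φ => if h : ∃ n, ρ n = φ then h.choose else 0) hφ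
        have h6 : (if h : ∃ n, ρ n = φ then h.choose else 0) = hex.choose := dif_pos hex
        exact le_trans (le_of_eq h6.symm) h5
      rw [← hex.choose_spec]
      exact (hρ hex.choose (b k)).2 ⟨b, hbv, rfl, hle _ _ hn b hbre⟩
    obtain ⟨x, hx⟩ := hsat c (Set.range ρ) hfs
    refine ⟨x, ?_⟩
    intro n
    obtain ⟨b, h1, h2, h3⟩ := (hρ n x).1 (hx (ρ n) ⟨n, rfl⟩)
    refine ⟨b, ?_, h3⟩
    intro i
    refine Fin.lastCases ?_ (fun j => ?_) i
    · rw [Fin.snoc_last]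
      exact h2
    · rw [Fin.snoc_castSucc]
      exact h1 j
  -- iterate
  let seq : (k : ℕ) → {v : Fin k → M //
      ∀ n, ∃ b : ℕ → M, (∀ i : Fin k, b (i : ℕ) = v i) ∧ (θ n).Realize (Sum.elim b e)} :=
    fun k => Nat.rec
      ⟨fun i => i.elim0, fun n => (h0 n).imp (fun b hb => ⟨fun i => i.elim0, hb⟩)⟩
      (fun k ih => ⟨Fin.snoc ih.1 (key k ih.1 ih.2).choose, (key k ih.1 ih.2).choose_spec⟩) k
  set bs : ℕ → M := fun m => (seq (m+1)).1 (Fin.last m) with hbs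
  have hseqb : ∀ (k : ℕ) (i : Fin k), (seq k).1 i = bs (i : ℕ) := by
    intro k
    induction k with
    | zero => exact fun i => i.elim0
    | succ k ih =>
      intro i
      refine Fin.lastCases ?_ (fun j => ?_) i
      · simp [hbs]
      · have hs : (seq (k+1)).1 = Fin.snoc (seq k).1 (key k (seq k).1 (seq k).2).choose := rfl
        rw [hs, Fin.snoc_castSucc]
        simpa using ih j
  refine ⟨bs, ?_⟩
  intro n
  obtain ⟨b, hbv, hbre⟩ := (seq (RC_vb (θ n))).2 n
  refine (RC_frealize_congr (θ n) ?_).1 hbre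
  intro a ha
  rcases a with i | j
  · have hi : i < RC_vb (θ n) := RC_lt_vb_left ha
    simp only [Sum.elim_inl]
    exact (hbv ⟨i, hi⟩).trans (hseqb _ ⟨i, hi⟩)
  · rfl
end OmegaSat

section Step
variable {M : Type w} [L.Structure M]

/-- The countable set of requirements for the construction. -/
def RC_Task (L : FirstOrder.Language.{u, v}) : Type (max u v) :=
  ℕ ⊕ (Σ n : ℕ, L.BoundedFormula Empty (n+1) × (Fin n → ℕ ⊕ ℕ))

lemma RC_task_countable [Countable L.Symbols] : Countable (RC_Task L) := by
  have h1 : ∀ n : ℕ, Countable (L.BoundedFormula Empty (n+1) × (Fin n → ℕ ⊕ ℕ)) := by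
    intro n
    have := RC_countable_bf' (L := L) Empty (n+1)
    infer_instance
  unfold RC_Task
  infer_instance

/-- The atomic formula `P(v_j)` (left variable `j`). -/
def RC_pform (p : L.Relations 1) (j : ℕ) : L.Formula (ℕ ⊕ ℕ) :=
  Relations.boundedFormula p ![Term.var (Sum.inl (Sum.inl j))]

lemma RC_pform_realize (p : L.Relations 1) (j : ℕ) (w : ℕ ⊕ ℕ → M) :
    (RC_pform p j).Realize w ↔ w (Sum.inl j) ∈ Pset p M := by
  have h : (RC_pform p j).Realize w ↔
      RelMap (M := M) p (fun i : Fin 1 => Term.realize (Sum.elim w (default : Fin 0 → M))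
        ((![Term.var (Sum.inl (Sum.inl j))] : Fin 1 → L.Term ((ℕ ⊕ ℕ) ⊕ Fin 0)) i)) :=
    BoundedFormula.realize_rel
  rw [h]
  have h2 : (fun i : Fin 1 => Term.realize (Sum.elim w (default : Fin 0 → M))
      ((![Term.var (Sum.inl (Sum.inl j))] : Fin 1 → L.Term ((ℕ ⊕ ℕ) ⊕ Fin 0)) i)) = ![w (Sum.inl j)] := by
    funext i
    have : i = 0 := Subsingleton.elim i 0
    subst this
    simp [Term.realize]
  rw [h2]
  rfl

/-- What carrying out a requirement guarantees. -/
def RC_Fulfill (p : L.Relations 1) (e : ℕ → M) : RC_Task L → L.Formula (ℕ ⊕ ℕ) → Prop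
  | Sum.inl j, θ => ∀ b : ℕ → M, θ.Realize (Sum.elim b e) →
      b j ∈ Pset p M → b j ∈ Set.range e
  | Sum.inr ⟨n, φ₀, f⟩, θ => ∀ b : ℕ → M, θ.Realize (Sum.elim b e) →
      ∀ a : M, φ₀.Realize (default : Empty → M) (Fin.snoc (α := fun _ => M) (Sum.elim b e ∘ f) a) →
      ∃ a' : M, (a' ∈ Set.range e ∨ ∃ i : ℕ, a' = b i) ∧
        φ₀.Realize (default : Empty → M) (Fin.snoc (α := fun _ => M) (Sum.elim b e ∘ f) a')

lemma RC_step (p : L.Relations 1) (e : ℕ → M) (hcompl : CompleteSet p M (Set.range e))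
    (θ : L.Formula (ℕ ⊕ ℕ)) (hθ : ∃ b : ℕ → M, θ.Realize (Sum.elim b e)) (t : RC_Task L) :
    ∃ θ' : L.Formula (ℕ ⊕ ℕ), (∃ b : ℕ → M, θ'.Realize (Sum.elim b e)) ∧
      (∀ b : ℕ → M, θ'.Realize (Sum.elim b e) → θ.Realize (Sum.elim b e)) ∧
      RC_Fulfill p e t θ' := by
  classical
  obtain ⟨b₀, hb₀⟩ := hθ
  rcases t with j | ⟨n, φ₀, f⟩
  · -- omitting requirement for left variable j
    by_cases hc : ∃ b : ℕ → M, (θ ⊓ ∼(RC_pform p j)).Realize (Sum.elim b e)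
    · refine ⟨θ ⊓ ∼(RC_pform p j), hc, ?_, ?_⟩
      · intro b hb
        exact (Formula.realize_inf.1 hb).1
      · intro b hb hP
        exfalso
        have := (Formula.realize_inf.1 hb).2
        rw [Formula.realize_not, RC_pform_realize] at this
        exact this hP
    · -- every realization of θ puts v_j in P; use completeness
      have hb₀P : b₀ j ∈ Pset p M := by
        by_contra hP
        exact hc ⟨b₀, Formula.realize_inf.2 ⟨hb₀, by
          rw [Formula.realize_not, RC_pform_realize]; exact hP⟩⟩
      set N : ℕ := RC_vb θ with hN
      set gm : ℕ ⊕ ℕ → (Fin 1 ⊕ Fin N) ⊕ Fin N := fun s =>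
        Sum.elim (fun i => if i = j then Sum.inl (Sum.inl 0)
          else if h : i < N then Sum.inr ⟨i, h⟩ else Sum.inl (Sum.inl 0))
          (fun i => if h : i < N then Sum.inl (Sum.inr ⟨i, h⟩) else Sum.inl (Sum.inl 0)) s
        with hgm
      set φA : L.Formula (Fin 1 ⊕ Fin N) := Formula.iExs (Fin N) (θ.relabel gm) with hφA
      set cA : Fin N → M := fun i => e (i : ℕ) with hcA
      have hmemA : ∀ i : Fin N, cA i ∈ Set.range e := fun i => ⟨(i : ℕ), rfl⟩
      -- the given realization witnesses the hypothesis of completeness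
      have hex : ∃ x : M, x ∈ Pset p M ∧ φA.Realize (Sum.elim (fun _ => x) cA) := by
        refine ⟨b₀ j, hb₀P, ?_⟩
        rw [hφA, Formula.realize_iExs]
        simp only [Formula.realize_relabel, Function.comp_def]
        refine ⟨fun q => b₀ (q : ℕ), ?_⟩
        refine (RC_frealize_congr θ ?_).1 hb₀
        intro a ha
        rcases a with i | i
        · by_cases h1 : i = j
          · subst h1; simp [hgm]
          · have h2 : i < N := RC_lt_vb_left ha
            simp [hgm, h1, h2]
        · have h2 : i < N := RC_lt_vb_right ha
          simp [hgm, h2, hcA]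
      obtain ⟨a, haA, haP, haφ⟩ := hcompl N φA cA hmemA hex
      obtain ⟨i₀, hi₀⟩ := haA
      refine ⟨θ ⊓ Term.equal (Term.var (Sum.inl j)) (Term.var (Sum.inr i₀)), ?_, ?_, ?_⟩
      · -- satisfiable
        rw [hφA, Formula.realize_iExs] at haφ
        simp only [Formula.realize_relabel, Function.comp_def] at haφ
        obtain ⟨iF, hiF⟩ := haφ
        refine ⟨fun m => if m = j then a else if h : m < N then iF ⟨m, h⟩ else a, ?_⟩
        rw [Formula.realize_inf]
        constructor
        · refine (RC_frealize_congr θ ?_).2 hiF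
          intro s hs
          rcases s with i | i
          · by_cases h1 : i = j
            · subst h1; simp [hgm]
            · have h2 : i < N := RC_lt_vb_left hs
              simp [hgm, h1, h2]
          · have h2 : i < N := RC_lt_vb_right hs
            simp [hgm, h2, hcA]
        · rw [Formula.realize_equal]
          simp [Term.realize, hi₀]
      · intro b hb
        exact (Formula.realize_inf.1 hb).1
      · intro b hb _
        have := (Formula.realize_inf.1 hb).2
        rw [Formula.realize_equal] at this
        simp only [Term.realize_var, Sum.elim_inl, Sum.elim_inr] at this
        exact ⟨i₀, by rw [← this]⟩
  · -- Tarski–Vaught requirement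
    set t : ℕ := max (RC_vb θ) ((Finset.univ : Finset (Fin n)).sup
      (fun i => Sum.elim Nat.succ (fun _ => 0) (f i))) with ht
    have htvb : RC_vb θ ≤ t := by rw [ht]; exact le_max_left _ _
    have htf : ∀ (i : Fin n) (m : ℕ), f i = Sum.inl m → m < t := by
      intro i m hm
      have h1 : Sum.elim Nat.succ (fun _ => 0) (f i) ≤ t := by
        rw [ht]
        exact le_trans (Finset.le_sup (f := fun i : Fin n => Sum.elim Nat.succ (fun _ => 0) (f i))
          (Finset.mem_univ i)) (le_max_right _ _)
      rw [hm] at h1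
      exact h1
    set g1 : Fin (n+1) → ℕ ⊕ ℕ := fun i =>
      if h : (i : ℕ) < n then f ⟨(i : ℕ), h⟩ else Sum.inl t with hg1
    set χ : L.Formula (ℕ ⊕ ℕ) :=
      (Formula.relabel (Sum.elim Empty.elim g1)) φ₀.toFormula with hχ
    have hχr : ∀ b : ℕ → M, χ.Realize (Sum.elim b e) ↔
        φ₀.Realize (default : Empty → M)
          (Fin.snoc (α := fun _ => M) (Sum.elim b e ∘ f) (b t)) := by
      intro b
      rw [hχ, Formula.realize_relabel, BoundedFormula.realize_toFormula]
      have he : (Sum.elim b e ∘ Sum.elim Empty.elim g1) ∘ Sum.inl =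
          (default : Empty → M) := Subsingleton.elim _ _
      have hr : (Sum.elim b e ∘ Sum.elim Empty.elim g1) ∘ Sum.inr =
          Fin.snoc (α := fun _ => M) (Sum.elim b e ∘ f) (b t) := by
        funext i
        refine Fin.lastCases ?_ (fun j => ?_) i
        · have : g1 (Fin.last n) = Sum.inl t := by
            rw [hg1]; simp
          simp only [Function.comp_apply, Sum.elim_inr, this, Fin.snoc_last, Sum.elim_inl]
        · have : g1 (Fin.castSucc j) = f j := by
            simp [hg1, j.isLt, Fin.eta]
          simp only [Function.comp_apply, Sum.elim_inr, this, Fin.snoc_castSucc]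
      rw [he, hr]
    by_cases hc : ∃ b : ℕ → M, (θ ⊓ χ).Realize (Sum.elim b e)
    · refine ⟨θ ⊓ χ, hc, ?_, ?_⟩
      · intro b hb
        exact (Formula.realize_inf.1 hb).1
      · intro b hb a _
        refine ⟨b t, Or.inr ⟨t, rfl⟩, ?_⟩
        exact (hχr b).1 (Formula.realize_inf.1 hb).2
    · refine ⟨θ, ⟨b₀, hb₀⟩, fun b hb => hb, ?_⟩
      intro b hb a ha
      exfalso
      apply hc
      refine ⟨Function.update b t a, Formula.realize_inf.2 ⟨?_, ?_⟩⟩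
      · refine (RC_frealize_congr θ ?_).2 hb
        intro s hs
        rcases s with i | i
        · have h2 : i < RC_vb θ := RC_lt_vb_left hs
          have : i ≠ t := by omega
          simp [Function.update_of_ne this]
        · rfl
      · rw [hχr]
        have h1 : Function.update b t a t = a := Function.update_self _ _ _
        have h2 : Sum.elim (Function.update b t a) e ∘ f = Sum.elim b e ∘ f := by
          funext i
          rw [Function.comp_apply, Function.comp_apply]
          rcases hf : f i with m | m
          · have hmt : m ≠ t := fun hmt => by
              have := htf i m hf; omega
            simp [Function.update_of_ne hmt]
          · rfl
        rw [h1, h2]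
        exact ha
end Step

end RCAux

/-- a countable complete set is contained in a countable elementary
substructure with the same P-part. -/
theorem countable_complete_set_elementary_substructure
    {L : FirstOrder.Language.{u, v}} [Countable L.Symbols]
    (p : L.Relations 1) (hrel : Relational L)
    (T : L.Theory) (hcomp : T.IsComplete) (hqe : HasQE T) (hinf : PInfinite p T)
    (Mbar : Type (max u v)) [L.Structure Mbar] (hMbar : Mbar ⊨ T)
    (hsat : CountablySaturated (L := L) Mbar)
    (A : Set Mbar) (hA : A.Countable) (hAcomp : CompleteSet p Mbar A) :
    ∃ M : L.ElementarySubstructure Mbar, Countable M ∧ A ⊆ (M : Set Mbar) ∧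
      Pset p Mbar ∩ (M : Set Mbar) = Pset p Mbar ∩ A := by
  classical
  -- `A` is nonempty
  obtain ⟨x0, hx0⟩ := (hinf Mbar hMbar).nonempty
  have hAne : A.Nonempty := by
    obtain ⟨b, hbA, -, -⟩ := hAcomp 0 ⊤ (fun i => i.elim0) (fun i => i.elim0)
      ⟨x0, hx0, BoundedFormula.realize_top.2 trivial⟩
    exact ⟨b, hbA⟩
  obtain ⟨e, rfl⟩ := hA.exists_eq_range hAne
  -- enumerate the requirements
  have hc1 : Countable (RC_Task L) := RC_task_countable
  have hc2 : Nonempty (RC_Task L) := ⟨Sum.inl 0⟩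
  obtain ⟨task, htask⟩ := exists_surjective_nat (RC_Task L)
  -- the step function for the chain of conditions
  have H : ∀ (θ : {θ : L.Formula (ℕ ⊕ ℕ) // ∃ b : ℕ → Mbar, θ.Realize (Sum.elim b e)})
      (t : RC_Task L),
      ∃ θ2 : {θ : L.Formula (ℕ ⊕ ℕ) // ∃ b : ℕ → Mbar, θ.Realize (Sum.elim b e)},
        (∀ b : ℕ → Mbar, θ2.1.Realize (Sum.elim b e) → θ.1.Realize (Sum.elim b e)) ∧
        RC_Fulfill p e t θ2.1 := by
    intro θ t
    obtain ⟨θ2, h1, h2, h3⟩ := RC_step p e hAcomp θ.1 θ.2 t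
    exact ⟨⟨θ2, h1⟩, h2, h3⟩
  choose F hF1 hF2 using H
  let chain : ℕ → {θ : L.Formula (ℕ ⊕ ℕ) // ∃ b : ℕ → Mbar, θ.Realize (Sum.elim b e)} :=
    fun k => Nat.rec ⟨⊤, fun _ => e 0, BoundedFormula.realize_top.2 trivial⟩
      (fun k ih => F ih (task k)) k
  have himpl : ∀ (k : ℕ) (b : ℕ → Mbar), (chain (k+1)).1.Realize (Sum.elim b e) →
      (chain k).1.Realize (Sum.elim b e) := fun k => hF1 (chain k) (task k)
  have hful : ∀ k : ℕ, RC_Fulfill p e (task k) (chain (k+1)).1 :=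
    fun k => hF2 (chain k) (task k)
  -- realize the whole chain by countable saturation
  obtain ⟨bs, hbs⟩ := RC_omega_sat hsat e (fun k => (chain k).1) (fun k => (chain k).2) himpl
  -- the substructure
  let S : L.Substructure Mbar := ⟨Set.range e ∪ Set.range bs, fun {m} F0 => (hrel m).elim F0⟩
  have hmemS : ∀ x : Mbar, x ∈ S ↔ x ∈ Set.range e ∪ Set.range bs := fun x => Iff.rfl
  -- the Tarski–Vaught test
  have htv : ∀ (n : ℕ) (φ₀ : L.BoundedFormula Empty (n + 1)) (x : Fin n → S) (a : Mbar),
      φ₀.Realize default (Fin.snoc ((↑) ∘ x) a : _ → Mbar) →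
      ∃ b : S, φ₀.Realize default (Fin.snoc ((↑) ∘ x) b : _ → Mbar) := by
    intro n φ₀ x a ha
    have hx : ∀ i : Fin n, ∃ s : ℕ ⊕ ℕ, Sum.elim bs e s = (x i : Mbar) := by
      intro i
      rcases (hmemS _).1 (x i).2 with h | h
      · obtain ⟨m, hm⟩ := h; exact ⟨Sum.inr m, hm⟩
      · obtain ⟨m, hm⟩ := h; exact ⟨Sum.inl m, hm⟩
    choose f hf using hx
    obtain ⟨k, hk⟩ := htask (Sum.inr ⟨n, φ₀, f⟩)
    have hfulk := hful k
    rw [hk] at hfulk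
    have hsnoc : (Sum.elim bs e ∘ f) = ((↑) ∘ x : Fin n → Mbar) := funext fun i => hf i
    obtain ⟨a', ha'mem, ha're⟩ := hfulk bs (hbs (k+1)) a (by rw [hsnoc]; exact ha)
    have ha'S : a' ∈ S := by
      rcases ha'mem with h | ⟨i, hi⟩
      · exact Or.inl h
      · exact Or.inr ⟨i, hi.symm⟩
    refine ⟨⟨a', ha'S⟩, ?_⟩
    rw [← hsnoc]
    exact ha're
  refine ⟨S.toElementarySubstructure htv, ?_, ?_, ?_⟩
  · -- countability
    have hcount : (Set.range e ∪ Set.range bs : Set Mbar).Countable :=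
      (Set.countable_range e).union (Set.countable_range bs)
    exact hcount.to_subtype
  · -- contains A
    intro a ha'
    exact Or.inl ha'
  · -- the P-part is that of A
    ext x
    constructor
    · rintro ⟨hxP, hxS⟩
      refine ⟨hxP, ?_⟩
      rcases hxS with h | ⟨i, hi⟩
      · exact h
      · subst hi
        obtain ⟨k, hk⟩ := htask (Sum.inl i)
        have hfulk := hful k
        rw [hk] at hfulk
        exact hfulk bs (hbs (k+1)) hxP
    · rintro ⟨hxP, hxA⟩
      exact ⟨hxP, Or.inl hxA⟩

end RelCatPaper
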